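/- The function H_1(y) = (y/2 + 1) · ln(1 + (1/y)·(1 + √(2(1+y)/(y−2)))) is strictly decreasing on [3, ∞); that is, for all real numbers y1, y2 with 3 ≤ y1 < y2, H_1(y2) < H_1(y1). -/

import Mathlib

/-- `H₁(y) = (y/2 + 1) · ln(1 + (1/y)(1 + √(2(1+y)/(y−2))))`. -/
noncomputable def H1 (y : ℝ) : ℝ :=
  (y / 2 + 1) * Real.log (1 + (1 / y) * (1 + Real.sqrt (2 * (1 + y) / (y - 2))))

namespace H1Aux

noncomputable def t (y : ℝ) : ℝ := Real.sqrt (2 * (1 + y) / (y - 2))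

noncomputable def u (y : ℝ) : ℝ := 1 + (1 + t y) / y

noncomputable def u' (y : ℝ) : ℝ :=
  ((-6 / (y - 2) ^ 2 / (2 * t y)) * y - (1 + t y) * 1) / y ^ 2

noncomputable def D (y : ℝ) : ℝ :=
  1 / 2 * Real.log (u y) + (y / 2 + 1) * (u' y / u y)

lemma t_pos {y : ℝ} (hy : 2 < y) : 0 < t y :=
  Real.sqrt_pos.mpr (div_pos (by linarith) (by linarith))

lemma t_sq {y : ℝ} (hy : 2 < y) : t y ^ 2 = 2 * (1 + y) / (y - 2) :=
  Real.sq_sqrt (le_of_lt (div_pos (by linarith) (by linarith)))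

lemma u_gt_one {y : ℝ} (hy : 2 < y) : 1 < u y := by
  have h1 : 0 < t y := t_pos hy
  have h2 : 0 < (1 + t y) / y := div_pos (by linarith) (by linarith)
  unfold u; linarith

lemma H1_eq (y : ℝ) : H1 y = (y / 2 + 1) * Real.log (u y) := by
  unfold H1 u t
  rw [div_mul_eq_mul_div, one_mul]

lemma hasDerivAtH1 (y : ℝ) (hy : 2 < y) : HasDerivAt H1 (D y) y := by
  have hy2 : y - 2 ≠ 0 := by linarith
  have hy0 : y ≠ 0 := by linarith
  have hg : HasDerivAt (fun z : ℝ => 2 * (1 + z) / (z - 2)) (-6 / (y - 2) ^ 2) y := by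
    have h1 : HasDerivAt (fun z : ℝ => 2 * (1 + z)) 2 y := by
      simpa using ((hasDerivAt_id y).const_add 1).const_mul 2
    have h2 : HasDerivAt (fun z : ℝ => z - 2) 1 y := (hasDerivAt_id y).sub_const 2
    have h3 := h1.div h2 hy2
    refine (congrArg (HasDerivAt _ · y) ?_).mpr h3
    ring
  have hgne : 2 * (1 + y) / (y - 2) ≠ 0 :=
    ne_of_gt (div_pos (by linarith) (by linarith))
  have ht : HasDerivAt t (-6 / (y - 2) ^ 2 / (2 * t y)) y := hg.sqrt hgne
  have hnum : HasDerivAt (fun z => 1 + t z) (-6 / (y - 2) ^ 2 / (2 * t y)) y :=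
    ht.const_add 1
  have hu : HasDerivAt u (u' y) y := by
    have h4 := hnum.div (hasDerivAt_id y) hy0
    exact (h4.const_add 1 : _)
  have hune : u y ≠ 0 := by have := u_gt_one hy; linarith
  have hlog : HasDerivAt (fun z => Real.log (u z)) (u' y / u y) y := hu.log hune
  have hc : HasDerivAt (fun z : ℝ => z / 2 + 1) (1 / 2) y := by
    simpa using ((hasDerivAt_id y).div_const 2).add_const 1
  have hmul := hc.mul hlog
  have heq : H1 = fun z => (z / 2 + 1) * Real.log (u z) := funext H1_eq
  rw [heq]
  exact hmul

lemma key_ineq {y : ℝ} (hy : 3 < y) : t y * (y + 4) * (y - 2) ≤ 3 * y * (y + 2) := by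
  have hy2 : 2 < y := by linarith
  have ht := t_pos hy2
  have ht2 : t y ^ 2 * (y - 2) = 2 * (1 + y) := by
    rw [t_sq hy2, div_mul_cancel₀ _ (show y - 2 ≠ 0 by linarith)]
  nlinarith [ht2, ht, sq_nonneg (t y * (y + 4) * (y - 2) - 3 * y * (y + 2)),
    sq_nonneg (t y * (y + 4) * (y - 2) + 3 * y * (y + 2)),
    mul_pos ht (show (0:ℝ) < (y + 4) * (y - 2) by nlinarith)]

lemma D_neg {y : ℝ} (hy : 3 < y) : D y < 0 := by
  have hy2 : 2 < y := by linarith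
  have ht := t_pos hy2
  have ht2 : t y ^ 2 * (y - 2) = 2 * (1 + y) := by
    rw [t_sq hy2, div_mul_cancel₀ _ (show y - 2 ≠ 0 by linarith)]
  have hu1 := u_gt_one hy2
  have hu0 : 0 < u y := by linarith
  have hlog : Real.log (u y) < u y - 1 :=
    Real.log_lt_sub_one_of_pos hu0 (by linarith)
  have key := key_ineq hy
  have hmain : (u y - 1) * u y + (y + 2) * u' y ≤ 0 := by
    have hyne : y ≠ 0 := by linarith
    have hy2ne : y - 2 ≠ 0 := by linarith
    have htne : t y ≠ 0 := ne_of_gt ht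
    have hd : 0 < y ^ 2 * (y - 2) ^ 2 * t y := by
      apply mul_pos (by positivity) ht
    have hE : ((u y - 1) * u y + (y + 2) * u' y) * (y ^ 2 * (y - 2) ^ 2 * t y)
        = t y * (y + 4) * (y - 2) - 3 * y * (y + 2) := by
      unfold u u'
      field_simp
      linear_combination (2 * t y * (y - 2)) * ht2
    nlinarith [hE, hd, key]
  have h5 : (y + 2) * (u' y / u y) ≤ -(u y - 1) := by
    rw [mul_div_assoc', div_le_iff₀ hu0]
    nlinarith [hmain]
  have hD : D y = 1 / 2 * (Real.log (u y) + (y + 2) * (u' y / u y)) := by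
    unfold D; ring
  rw [hD]
  linarith

end H1Aux

theorem H1_strictAnti (y1 y2 : ℝ) (h1 : 3 ≤ y1) (h12 : y1 < y2) : H1 y2 < H1 y1 := by
  have hs : StrictAntiOn H1 (Set.Ici 3) := by
    apply strictAntiOn_of_deriv_neg (convex_Ici 3)
    · intro x hx
      have hx3 : (3:ℝ) ≤ x := hx
      exact (H1Aux.hasDerivAtH1 x (by linarith)).differentiableAt.continuousAt.continuousWithinAt
    · intro x hx
      rw [interior_Ici] at hx
      have hx3 : (3:ℝ) < x := hx
      rw [(H1Aux.hasDerivAtH1 x (by linarith)).deriv]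
      exact H1Aux.D_neg hx3
  exact hs (Set.mem_Ici.mpr h1) (Set.mem_Ici.mpr (by linarith)) h12
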